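/- arXiv:math/9811154 — 2 statements merged into one kernel-verified Lean document; each statement's English description precedes it below -/
import Mathlib

section
/- For every integer n ≥ 2 and every real t > 0, the quantities U_n satisfy the discrete Painlevé II recurrence (n/t)·U_n(t) + (1 − U_n(t)²)·(U_{n−1}(t) + U_{n+1}(t)) = 0. -/
open MeasureTheory Matrix Filter

/-- The k-th Fourier coefficient of the symbol `f(e^{iθ}) = e^{2t cos θ}`. -/
noncomputable def fk (t : ℝ) (k : ℤ) : ℝ :=
  (1 / (2 * Real.pi)) *
    ∫ θ in (0:ℝ)..(2 * Real.pi), Real.exp (2 * t * Real.cos θ) * Real.cos ((k : ℝ) * θ)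

/-- The n×n Toeplitz matrix `T_n(t)` with (j,k) entry `f_{j-k}(t)`. -/
noncomputable def Tmat (n : ℕ) (t : ℝ) : Matrix (Fin n) (Fin n) ℝ :=
  fun j k => fk t ((j : ℤ) - (k : ℤ))

/-- The Toeplitz determinant `D_n(t)`. -/
noncomputable def Dn (n : ℕ) (t : ℝ) : ℝ := (Tmat n t).det

/-- δ⁺ = (1,0,…,0)ᵀ. -/
def deltaPlus (n : ℕ) : Fin n → ℝ := fun i => if (i : ℕ) = 0 then 1 else 0

/-- δ⁻ = (0,…,0,1)ᵀ. -/
def deltaMinus (n : ℕ) : Fin n → ℝ := fun i => if (i : ℕ) = n - 1 then 1 else 0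

/-- f⁺ = (f_1,…,f_n)ᵀ. -/
noncomputable def fplus (n : ℕ) (t : ℝ) : Fin n → ℝ := fun j => fk t ((j : ℤ) + 1)

/-- f⁻ = (f_n,…,f_1)ᵀ. -/
noncomputable def fminus (n : ℕ) (t : ℝ) : Fin n → ℝ := fun j => fk t ((n : ℤ) - (j : ℤ))

/-- U_n(t) = ⟨T_n(t)⁻¹ f⁺, δ⁻⟩. -/
noncomputable def Un (n : ℕ) (t : ℝ) : ℝ :=
  dotProduct ((Tmat n t)⁻¹ *ᵥ fplus n t) (deltaMinus n)

/-- V_n⁺(t) = ⟨T_n(t)⁻¹ δ⁺, δ⁺⟩. -/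
noncomputable def Vplus (n : ℕ) (t : ℝ) : ℝ :=
  dotProduct ((Tmat n t)⁻¹ *ᵥ deltaPlus n) (deltaPlus n)

/-- V_n⁻(t) = ⟨T_n(t)⁻¹ δ⁻, δ⁺⟩. -/
noncomputable def Vminus (n : ℕ) (t : ℝ) : ℝ :=
  dotProduct ((Tmat n t)⁻¹ *ᵥ deltaMinus n) (deltaPlus n)

lemma fk_symm (t : ℝ) (k : ℤ) : fk t (-k) = fk t k := by
  unfold fk
  congr 1
  apply intervalIntegral.integral_congr
  intro θ _
  push_cast
  rw [neg_mul, Real.cos_neg]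

lemma cont_aux (t c : ℝ) :
    Continuous (fun θ : ℝ => Real.exp (2*t*Real.cos θ) * Real.cos (c*θ)) := by
  fun_prop

lemma fk_rec (t : ℝ) (k : ℤ) : (k : ℝ) * fk t k = t * (fk t (k-1) - fk t (k+1)) := by
  have hderiv : ∀ θ ∈ Set.uIcc (0:ℝ) (2*Real.pi),
      HasDerivAt (fun θ => Real.exp (2*t*Real.cos θ) * Real.sin ((k:ℝ)*θ))
        (Real.exp (2*t*Real.cos θ) * (2*t*(-Real.sin θ)) * Real.sin ((k:ℝ)*θ)
          + Real.exp (2*t*Real.cos θ) * (Real.cos ((k:ℝ)*θ) * (k:ℝ))) θ := by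
    intro θ _
    have h1 : HasDerivAt (fun θ : ℝ => 2*t*Real.cos θ) (2*t*(-Real.sin θ)) θ := by
      simpa [mul_comm] using (Real.hasDerivAt_cos θ).const_mul (2*t)
    have h2 : HasDerivAt (fun θ : ℝ => (k:ℝ)*θ) (k:ℝ) θ := by
      simpa using (hasDerivAt_id θ).const_mul (k:ℝ)
    have h3 : HasDerivAt (fun θ : ℝ => Real.sin ((k:ℝ)*θ)) (Real.cos ((k:ℝ)*θ) * (k:ℝ)) θ := by
      exact h2.sin
    exact h1.exp.mul h3
  have hint : IntervalIntegrable (fun θ =>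
      Real.exp (2*t*Real.cos θ) * (2*t*(-Real.sin θ)) * Real.sin ((k:ℝ)*θ)
        + Real.exp (2*t*Real.cos θ) * (Real.cos ((k:ℝ)*θ) * (k:ℝ))) MeasureTheory.volume 0 (2*Real.pi) := by
    apply Continuous.intervalIntegrable
    fun_prop
  have hzero : (∫ θ in (0:ℝ)..(2*Real.pi),
      (Real.exp (2*t*Real.cos θ) * (2*t*(-Real.sin θ)) * Real.sin ((k:ℝ)*θ)
        + Real.exp (2*t*Real.cos θ) * (Real.cos ((k:ℝ)*θ) * (k:ℝ)))) = 0 := by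
    rw [intervalIntegral.integral_eq_sub_of_hasDerivAt hderiv hint]
    have e1 : Real.sin ((k:ℝ)*(2*Real.pi)) = 0 := by
      have : (k:ℝ)*(2*Real.pi) = ((2*k : ℤ):ℝ) * Real.pi := by push_cast; ring
      rw [this, Real.sin_int_mul_pi]
    simp [e1]
  have hcong : ∀ θ ∈ Set.uIcc (0:ℝ) (2*Real.pi),
      (Real.exp (2*t*Real.cos θ) * (2*t*(-Real.sin θ)) * Real.sin ((k:ℝ)*θ)
        + Real.exp (2*t*Real.cos θ) * (Real.cos ((k:ℝ)*θ) * (k:ℝ)))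
      = (k:ℝ) * (Real.exp (2*t*Real.cos θ) * Real.cos ((k:ℝ)*θ))
        - t * (Real.exp (2*t*Real.cos θ) * Real.cos ((((k-1):ℤ):ℝ)*θ))
        + t * (Real.exp (2*t*Real.cos θ) * Real.cos ((((k+1):ℤ):ℝ)*θ)) := by
    intro θ _
    have htrig : Real.cos ((((k-1):ℤ):ℝ)*θ) - Real.cos ((((k+1):ℤ):ℝ)*θ)
        = 2*Real.sin ((k:ℝ)*θ)*Real.sin θ := by
      rw [Real.cos_sub_cos]
      push_cast
      have e1 : (((k:ℝ)-1)*θ + ((k:ℝ)+1)*θ)/2 = (k:ℝ)*θ := by ring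
      have e2 : (((k:ℝ)-1)*θ - ((k:ℝ)+1)*θ)/2 = -θ := by ring
      rw [e1, e2, Real.sin_neg]
      ring
    linear_combination (t * Real.exp (2*t*Real.cos θ)) * htrig
  have hzero2 : (∫ θ in (0:ℝ)..(2*Real.pi),
      ((k:ℝ) * (Real.exp (2*t*Real.cos θ) * Real.cos ((k:ℝ)*θ))
        - t * (Real.exp (2*t*Real.cos θ) * Real.cos ((((k-1):ℤ):ℝ)*θ))
        + t * (Real.exp (2*t*Real.cos θ) * Real.cos ((((k+1):ℤ):ℝ)*θ)))) = 0 := by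
    rw [← intervalIntegral.integral_congr hcong]
    exact hzero
  have hsplit : (k:ℝ) * (∫ θ in (0:ℝ)..(2*Real.pi), Real.exp (2*t*Real.cos θ) * Real.cos ((k:ℝ)*θ))
      - t * (∫ θ in (0:ℝ)..(2*Real.pi), Real.exp (2*t*Real.cos θ) * Real.cos ((((k-1):ℤ):ℝ)*θ))
      + t * (∫ θ in (0:ℝ)..(2*Real.pi), Real.exp (2*t*Real.cos θ) * Real.cos ((((k+1):ℤ):ℝ)*θ)) = 0 := by
    rw [← intervalIntegral.integral_const_mul, ← intervalIntegral.integral_const_mul,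
      ← intervalIntegral.integral_const_mul, ← intervalIntegral.integral_sub, ← intervalIntegral.integral_add]
    · exact hzero2
    all_goals exact Continuous.intervalIntegrable (by fun_prop) _ _
  unfold fk
  linear_combination (1/(2*Real.pi)) * hsplit


lemma form_eq (n : ℕ) (t : ℝ) (x : Fin n → ℝ) :
    dotProduct x (Tmat n t *ᵥ x)
    = (1/(2*Real.pi)) * ∫ θ in (0:ℝ)..(2*Real.pi), Real.exp (2*t*Real.cos θ) *
        ((∑ j, x j * Real.cos (j*θ))^2 + (∑ j, x j * Real.sin (j*θ))^2) := by
  set G : Fin n → Fin n → ℝ → ℝ := fun i j θ =>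
    x i * x j * (Real.exp (2*t*Real.cos θ) * Real.cos (((i:ℝ)-(j:ℝ))*θ)) with hG
  have hGcont : ∀ i j, Continuous (G i j) := by intro i j; rw [hG]; fun_prop
  have hGint : ∀ i j, IntervalIntegrable (G i j) volume 0 (2*Real.pi) :=
    fun i j => (hGcont i j).intervalIntegrable _ _
  have step1 : dotProduct x (Tmat n t *ᵥ x)
      = ∑ i, ∑ j, (1/(2*Real.pi)) * ∫ θ in (0:ℝ)..(2*Real.pi), G i j θ := by
    rw [dotProduct]
    apply Finset.sum_congr rfl
    intro i _
    rw [Matrix.mulVec, dotProduct, Finset.mul_sum]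
    apply Finset.sum_congr rfl
    intro j _
    show x i * (fk t ((i:ℤ)-(j:ℤ)) * x j) = _
    rw [hG]
    rw [intervalIntegral.integral_const_mul (x i * x j)]
    rw [fk]
    rw [show ((((i:ℤ)-(j:ℤ)) : ℤ) : ℝ) = (i:ℝ)-(j:ℝ) from by push_cast; ring]
    ring
  have step2 : ∑ i, ∑ j, (1/(2*Real.pi)) * ∫ θ in (0:ℝ)..(2*Real.pi), G i j θ
      = (1/(2*Real.pi)) * ∫ θ in (0:ℝ)..(2*Real.pi), ∑ i, ∑ j, G i j θ := by
    have h1 : ∀ i : Fin n, ∑ j, ∫ θ in (0:ℝ)..(2*Real.pi), G i j θ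
        = ∫ θ in (0:ℝ)..(2*Real.pi), ∑ j, G i j θ :=
      fun i => (intervalIntegral.integral_finset_sum (fun j _ => hGint i j)).symm
    have h2 : ∑ i, ∫ θ in (0:ℝ)..(2*Real.pi), (∑ j, G i j θ)
        = ∫ θ in (0:ℝ)..(2*Real.pi), ∑ i, ∑ j, G i j θ :=
      (intervalIntegral.integral_finset_sum
        (fun i _ => (continuous_finset_sum _ (fun j _ => hGcont i j)).intervalIntegrable _ _)).symm
    rw [← h2, Finset.mul_sum]
    apply Finset.sum_congr rfl
    intro i _
    rw [← h1, Finset.mul_sum]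
  have step3 : ∀ θ : ℝ, ∑ i, ∑ j, G i j θ = Real.exp (2*t*Real.cos θ) *
      ((∑ j, x j * Real.cos (j*θ))^2 + (∑ j, x j * Real.sin (j*θ))^2) := by
    intro θ
    have e1 : (∑ j, x j * Real.cos (j*θ))^2
        = ∑ i, ∑ j, (x i * Real.cos (i*θ)) * (x j * Real.cos (j*θ)) := by
      rw [sq, Finset.sum_mul_sum]
    have e2 : (∑ j, x j * Real.sin (j*θ))^2
        = ∑ i, ∑ j, (x i * Real.sin (i*θ)) * (x j * Real.sin (j*θ)) := by
      rw [sq, Finset.sum_mul_sum]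
    rw [e1, e2, ← Finset.sum_add_distrib, Finset.mul_sum]
    apply Finset.sum_congr rfl
    intro i _
    rw [← Finset.sum_add_distrib, Finset.mul_sum]
    apply Finset.sum_congr rfl
    intro j _
    rw [hG]
    show x i * x j * (Real.exp (2*t*Real.cos θ) * Real.cos (((i:ℝ)-(j:ℝ))*θ)) = _
    rw [show ((i:ℝ)-(j:ℝ))*θ = (i:ℝ)*θ - (j:ℝ)*θ from by ring, Real.cos_sub]
    ring
  rw [step1, step2]
  congr 1
  apply intervalIntegral.integral_congr
  intro θ _
  exact step3 θ

lemma exists_pos_point (n : ℕ) (x : Fin n → ℝ) (hx : x ≠ 0) :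
    ∃ θ0 ∈ Set.Ioo (0:ℝ) (2*Real.pi),
      0 < (∑ j, x j * Real.cos (j*θ0))^2 + (∑ j, x j * Real.sin (j*θ0))^2 := by
  obtain ⟨j0, hj0⟩ : ∃ j, x j ≠ 0 := by
    by_contra h; push_neg at h; exact hx (funext fun j => h j)
  set p : Polynomial ℂ := ∑ j : Fin n, Polynomial.C ((x j : ℂ)) * Polynomial.X ^ (j:ℕ) with hp
  have hcoeff : p.coeff j0 = (x j0 : ℂ) := by
    rw [hp, Polynomial.finset_sum_coeff]
    rw [Finset.sum_eq_single j0]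
    · simp [Polynomial.coeff_C_mul, Polynomial.coeff_X_pow]
    · intro b _ hb
      simp only [Polynomial.coeff_C_mul, Polynomial.coeff_X_pow]
      rw [if_neg (fun hh => hb (Fin.ext hh.symm)), mul_zero]
    · intro h; exact absurd (Finset.mem_univ _) h
  have hpne : p ≠ 0 := by
    intro h
    rw [h, Polynomial.coeff_zero] at hcoeff
    exact hj0 (by exact_mod_cast hcoeff.symm)
  have heval : ∀ θ:ℝ, p.eval (Complex.exp (θ*Complex.I))
      = ((∑ j, x j * Real.cos (j*θ) : ℝ) : ℂ) + ((∑ j, x j * Real.sin (j*θ) : ℝ):ℂ) * Complex.I := by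
    intro θ
    rw [hp, Polynomial.eval_finset_sum]
    have hterm : ∀ j : Fin n, Polynomial.eval (Complex.exp (θ*Complex.I))
        (Polynomial.C ((x j:ℂ)) * Polynomial.X ^ (j:ℕ))
        = ((x j * Real.cos (j*θ) : ℝ) : ℂ) + ((x j * Real.sin (j*θ) : ℝ) : ℂ) * Complex.I := by
      intro j
      rw [Polynomial.eval_mul, Polynomial.eval_C, Polynomial.eval_pow, Polynomial.eval_X]
      rw [← Complex.exp_nat_mul]
      rw [show ((j:ℕ):ℂ) * (↑θ * Complex.I) = ↑((j:ℕ)*θ) * Complex.I from by push_cast; ring]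
      rw [Complex.exp_mul_I]
      push_cast
      ring
    rw [Finset.sum_congr rfl (fun j _ => hterm j)]
    push_cast
    rw [Finset.sum_add_distrib, ← Finset.sum_mul]
  -- finiteness of the zero set
  set Z : Set ℝ := Set.Ioo (0:ℝ) (2*Real.pi) ∩
    ((fun θ : ℝ => Complex.exp (θ*Complex.I)) ⁻¹' {z | p.IsRoot z}) with hZ
  have hinj : Set.InjOn (fun θ : ℝ => Complex.exp (θ * Complex.I)) (Set.Ioo 0 (2*Real.pi)) := by
    intro a ha b hb hab
    obtain ⟨m, hm⟩ := Complex.exp_eq_exp_iff_exists_int.mp hab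
    have him := congrArg Complex.im hm
    simp [Complex.add_im, Complex.mul_im, Complex.ofReal_im, Complex.ofReal_re] at him
    have hπ := Real.pi_pos
    have hmb : (-1 : ℝ) < (m:ℝ) ∧ (m:ℝ) < 1 := by
      constructor <;> nlinarith [ha.1, ha.2, hb.1, hb.2]
    have : m = 0 := by
      have h1 : (-1:ℤ) < m := by exact_mod_cast hmb.1
      have h2 : m < (1:ℤ) := by exact_mod_cast hmb.2
      omega
    rw [this] at him
    simpa using him
  have hZfin : Z.Finite := by
    apply Set.Finite.of_finite_image
    · apply (Polynomial.finite_setOf_isRoot hpne).subset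
      rintro z ⟨θ, hθ, rfl⟩
      exact hθ.2
    · exact hinj.mono Set.inter_subset_left
  have hIooInf : (Set.Ioo (0:ℝ) (2*Real.pi)).Infinite :=
    Set.Ioo_infinite (by positivity)
  obtain ⟨θ0, hθ0⟩ := (hIooInf.diff hZfin).nonempty
  refine ⟨θ0, hθ0.1, ?_⟩
  rcases lt_or_ge 0 ((∑ j, x j * Real.cos (j*θ0))^2 + (∑ j, x j * Real.sin (j*θ0))^2) with h | h
  · exact h
  exfalso
  have hzero : (∑ j, x j * Real.cos (j*θ0))^2 + (∑ j, x j * Real.sin (j*θ0))^2 = 0 :=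
    le_antisymm h (by positivity)
  have hC : (∑ j, x j * Real.cos (j*θ0)) = 0 := by nlinarith [sq_nonneg (∑ j, x j * Real.cos (j*θ0)), sq_nonneg (∑ j, x j * Real.sin (j*θ0))]
  have hS : (∑ j, x j * Real.sin (j*θ0)) = 0 := by nlinarith [sq_nonneg (∑ j, x j * Real.cos (j*θ0)), sq_nonneg (∑ j, x j * Real.sin (j*θ0))]
  have : p.IsRoot (Complex.exp (θ0*Complex.I)) := by
    rw [Polynomial.IsRoot, heval θ0, hC, hS]
    simp
  exact hθ0.2 ⟨hθ0.1, this⟩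

lemma tmat_posdef (n : ℕ) (t : ℝ) : (Tmat n t).PosDef := by
  rw [Matrix.posDef_iff_dotProduct_mulVec]; constructor
  · rw [Matrix.IsHermitian]
    ext i j
    rw [Matrix.conjTranspose_apply]
    show star (fk t ((j:ℤ) - (i:ℤ))) = fk t ((i:ℤ) - (j:ℤ))
    rw [star_trivial, ← fk_symm t ((i:ℤ) - (j:ℤ)), show -((i:ℤ)-(j:ℤ)) = (j:ℤ)-(i:ℤ) from by ring]
  · intro x hx
    rw [star_trivial, form_eq]
    obtain ⟨θ0, hθ0mem, hθ0⟩ := exists_pos_point n x hx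
    set g : ℝ → ℝ := fun θ => Real.exp (2*t*Real.cos θ) *
        ((∑ j, x j * Real.cos (j*θ))^2 + (∑ j, x j * Real.sin (j*θ))^2) with hg
    have hgcont : Continuous g := by
      rw [hg]
      apply Continuous.mul (by fun_prop)
      apply Continuous.add
      · exact (continuous_finset_sum _ (fun j _ => by fun_prop)).pow 2
      · exact (continuous_finset_sum _ (fun j _ => by fun_prop)).pow 2
    have hgnn : ∀ θ, 0 ≤ g θ := by intro θ; rw [hg]; positivity
    have hgθ0 : 0 < g θ0 := by
      rw [hg]; exact mul_pos (Real.exp_pos _) hθ0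
    have hopen : IsOpen {θ : ℝ | 0 < g θ} := isOpen_lt continuous_const hgcont
    obtain ⟨ε, hε, hball⟩ := Metric.isOpen_iff.mp hopen θ0 hgθ0
    set c := max 0 (θ0 - ε/2) with hc
    set d := min (2*Real.pi) (θ0 + ε/2) with hd
    have hc0 : 0 ≤ c := le_max_left _ _
    have hd2π : d ≤ 2*Real.pi := min_le_left _ _
    have hcθ : c < θ0 := max_lt hθ0mem.1 (by linarith)
    have hθd : θ0 < d := lt_min hθ0mem.2 (by linarith)
    have hcd : c < d := lt_trans hcθ hθd
    have hmid : 0 < ∫ θ in c..d, g θ := by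
      apply intervalIntegral.intervalIntegral_pos_of_pos_on
        (hgcont.intervalIntegrable _ _) _ hcd
      intro θ hθ
      apply hball
      rw [Metric.mem_ball, Real.dist_eq, abs_lt]
      have h1 : θ0 - ε/2 ≤ c := le_max_right _ _
      have h2 : d ≤ θ0 + ε/2 := min_le_right _ _
      constructor <;> [linarith [hθ.1]; linarith [hθ.2]]
    have hsplit : (∫ θ in (0:ℝ)..(2*Real.pi), g θ)
        = (∫ θ in (0:ℝ)..c, g θ) + (∫ θ in c..d, g θ) + (∫ θ in d..(2*Real.pi), g θ) := by
      rw [intervalIntegral.integral_add_adjacent_intervals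
        (hgcont.intervalIntegrable _ _) (hgcont.intervalIntegrable _ _),
        intervalIntegral.integral_add_adjacent_intervals
        (hgcont.intervalIntegrable _ _) (hgcont.intervalIntegrable _ _)]
    have h1nn : 0 ≤ ∫ θ in (0:ℝ)..c, g θ :=
      intervalIntegral.integral_nonneg hc0 (fun u _ => hgnn u)
    have h2nn : 0 ≤ ∫ θ in d..(2*Real.pi), g θ :=
      intervalIntegral.integral_nonneg hd2π (fun u _ => hgnn u)
    have : 0 < ∫ θ in (0:ℝ)..(2*Real.pi), g θ := by
      rw [hsplit]; linarith
    have hπ : 0 < 1/(2*Real.pi) := by positivity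
    exact mul_pos hπ this


/- ### Linear algebra layer -/

lemma tmat_isUnit (n : ℕ) (t : ℝ) : IsUnit (Tmat n t).det :=
  (tmat_posdef n t).det_pos.ne'.isUnit

lemma tmat_mulVec_inv (n : ℕ) (t : ℝ) (v : Fin n → ℝ) :
    Tmat n t *ᵥ ((Tmat n t)⁻¹ *ᵥ v) = v := by
  rw [Matrix.mulVec_mulVec, Matrix.mul_nonsing_inv _ (tmat_isUnit n t), Matrix.one_mulVec]

lemma tmat_inj (n : ℕ) (t : ℝ) (v : Fin n → ℝ) (h : Tmat n t *ᵥ v = 0) : v = 0 := by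
  have := congrArg (fun w => (Tmat n t)⁻¹ *ᵥ w) h
  simpa [Matrix.mulVec_mulVec, Matrix.nonsing_inv_mul _ (tmat_isUnit n t),
    Matrix.one_mulVec] using this

/-- solution coefficients of `T_m x = f⁺`, as a function on `ℕ`. -/
noncomputable def xcoef (t : ℝ) (m : ℕ) (l : ℕ) : ℝ :=
  if h : l < m then ((Tmat m t)⁻¹ *ᵥ (fplus m t)) ⟨l, h⟩ else 0

lemma row_eq (t : ℝ) (m : ℕ) (i : ℕ) (hi : i < m) :
    ∑ l ∈ Finset.range m, fk t ((i:ℤ) - l) * xcoef t m l = fk t ((i:ℤ) + 1) := by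
  have h := congrFun (tmat_mulVec_inv m t (fplus m t)) ⟨i, hi⟩
  rw [Matrix.mulVec, dotProduct] at h
  have he : ∑ l ∈ Finset.range m, fk t ((i:ℤ) - l) * xcoef t m l
      = ∑ l : Fin m, Tmat m t ⟨i, hi⟩ l *
        ((Tmat m t)⁻¹ *ᵥ (fplus m t)) l := by
    rw [Finset.sum_range]
    apply Finset.sum_congr rfl
    intro l _
    simp [xcoef, l.isLt, Tmat]
  rw [he]
  exact h

/-- Coefficients of the monic orthogonal polynomial `Φ_m`. -/
noncomputable def phi (t : ℝ) (m : ℕ) (j : ℕ) : ℝ :=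
  if j < m then -(xcoef t m (m - 1 - j)) else if j = m then 1 else 0

lemma phi_self (t : ℝ) (m : ℕ) : phi t m m = 1 := by simp [phi]

lemma phi_gt (t : ℝ) {m j : ℕ} (h : m < j) : phi t m j = 0 := by
  simp [phi, Nat.lt_asymm h, Nat.ne_of_gt h]

lemma phi_lt (t : ℝ) {m j : ℕ} (h : j < m) : phi t m j = -(xcoef t m (m - 1 - j)) := by
  simp [phi, h]

/-- `L(z^{-k} P)` for a polynomial with coefficients `c` supported on `[0, N)`. -/
noncomputable def LL (t : ℝ) (c : ℕ → ℝ) (N : ℕ) (k : ℤ) : ℝ :=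
  ∑ j ∈ Finset.range N, c j * fk t ((j:ℤ) - k)

noncomputable def hh (t : ℝ) (m : ℕ) : ℝ := LL t (phi t m) (m+1) (m:ℤ)

lemma phi_orth (t : ℝ) (m : ℕ) (k : ℤ) (h0 : 0 ≤ k) (h1 : k < (m:ℤ)) :
    LL t (phi t m) (m+1) k = 0 := by
  obtain ⟨K, rfl⟩ := Int.eq_ofNat_of_zero_le h0
  have hK : K < m := by exact_mod_cast h1
  rw [LL, Finset.sum_range_succ, phi_self]
  have hrefl : ∑ j ∈ Finset.range m, phi t m j * fk t ((j:ℤ) - K)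
      = ∑ l ∈ Finset.range m, -(xcoef t m l) * fk t (((m-1-l : ℕ) :ℤ) - K) := by
    rw [← Finset.sum_range_reflect (fun l => -(xcoef t m l) * fk t (((m-1-l : ℕ) :ℤ) - K)) m]
    apply Finset.sum_congr rfl
    intro j hj
    rw [Finset.mem_range] at hj
    rw [phi_lt t hj]
    congr 2
    omega
  rw [hrefl]
  have hterm : ∀ l ∈ Finset.range m,
      -(xcoef t m l) * fk t (((m-1-l : ℕ) :ℤ) - K)
        = -(fk t (((m-1-K : ℕ):ℤ) - l) * xcoef t m l) := by
    intro l hl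
    rw [Finset.mem_range] at hl
    have : ((m-1-l : ℕ) :ℤ) - K = ((m-1-K : ℕ):ℤ) - l := by omega
    rw [this]; ring
  rw [Finset.sum_congr rfl hterm, Finset.sum_neg_distrib, row_eq t m (m-1-K) (by omega)]
  have : ((m-1-K : ℕ):ℤ) + 1 = (m:ℤ) - K := by omega
  rw [this]; ring


lemma LL_fin (t : ℝ) (m : ℕ) (c : ℕ → ℝ) (i : Fin (m+1)) :
    ∑ l : Fin (m+1), fk t ((i:ℤ) - (l:ℤ)) * c l = LL t c (m+1) (i:ℤ) := by
  rw [LL, Finset.sum_range]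
  apply Finset.sum_congr rfl
  intro l _
  rw [fk_symm t ((l:ℤ) - i) |>.symm]
  rw [show -((l:ℤ) - i) = (i:ℤ) - l by ring]
  ring

lemma hh_pos (t : ℝ) (m : ℕ) : 0 < hh t m := by
  set v : Fin (m+1) → ℝ := fun i => phi t m i with hv
  have hvne : v ≠ 0 := by
    intro h
    have := congrFun h ⟨m, by omega⟩
    simp [hv, phi_self] at this
  have hp := (tmat_posdef (m+1) t).dotProduct_mulVec_pos hvne
  have : dotProduct (star v) (Tmat (m+1) t *ᵥ v) = hh t m := by
    rw [show star v = v from star_trivial v, dotProduct]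
    have hinner : ∀ i : Fin (m+1), (Tmat (m+1) t *ᵥ v) i = LL t (phi t m) (m+1) (i:ℤ) := by
      intro i
      rw [Matrix.mulVec, dotProduct, ← LL_fin t m (phi t m) i]
      rfl
    have : ∑ i : Fin (m+1), v i * (Tmat (m+1) t *ᵥ v) i
        = ∑ i : Fin (m+1), phi t m i * LL t (phi t m) (m+1) (i:ℤ) := by
      apply Finset.sum_congr rfl; intro i _; rw [hinner]
    rw [this, ← Finset.sum_range (fun j => phi t m j * LL t (phi t m) (m+1) (j:ℤ)),
      Finset.sum_range_succ, phi_self, one_mul]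
    have hz : ∀ j ∈ Finset.range m, phi t m j * LL t (phi t m) (m+1) (j:ℤ) = 0 := by
      intro j hj
      rw [Finset.mem_range] at hj
      rw [phi_orth t m j (by positivity) (by exact_mod_cast hj), mul_zero]
    rw [Finset.sum_congr rfl hz, Finset.sum_const_zero, zero_add, hh]
  rwa [this] at hp


lemma un_eq (t : ℝ) (m : ℕ) (hm : 1 ≤ m) : Un m t = -(phi t m 0) := by
  rw [Un, dotProduct, phi_lt t (by omega : 0 < m)]
  rw [Finset.sum_eq_single (⟨m-1, by omega⟩ : Fin m)]
  · simp [xcoef, Nat.sub_lt_of_pos_le (by omega) hm, deltaMinus, fplus]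
  · intro b _ hb
    have : (b : ℕ) ≠ m - 1 := fun h => hb (Fin.ext (by simpa using h))
    simp [this, deltaMinus]
  · intro h
    exact absurd (Finset.mem_univ _) h


lemma phi_uniq (t : ℝ) (m : ℕ) (c : ℕ → ℝ) (hc1 : c (m+1) = 1)
    (hc2 : ∀ j, m+1 < j → c j = 0)
    (hc3 : ∀ k : ℕ, k < m+1 → (∑ j ∈ Finset.range (m+2), c j * fk t ((j:ℤ) - k)) = 0) :
    ∀ j, c j = phi t (m+1) j := by
  set d : ℕ → ℝ := fun j => c j - phi t (m+1) j with hd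
  have hdtop : d (m+1) = 0 := by simp [hd, hc1, phi_self]
  have hdsum : ∀ k : ℕ, k < m+1 → ∑ j ∈ Finset.range (m+1), d j * fk t ((j:ℤ) - k) = 0 := by
    intro k hk
    have h1 : ∑ j ∈ Finset.range (m+2), d j * fk t ((j:ℤ) - k) = 0 := by
      have := phi_orth t (m+1) k (by positivity) (by exact_mod_cast hk)
      rw [LL] at this
      simp only [hd, sub_mul]
      rw [Finset.sum_sub_distrib, hc3 k hk, this, sub_zero]
    rw [Finset.sum_range_succ, hdtop, zero_mul, add_zero] at h1
    exact h1
  have hv : (fun i : Fin (m+1) => d i) = 0 := by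
    apply tmat_inj (m+1) t
    funext i
    rw [Matrix.mulVec, dotProduct]
    have : ∀ l : Fin (m+1), Tmat (m+1) t i l * d l = d l * fk t ((l:ℤ) - i) := by
      intro l
      rw [show Tmat (m+1) t i l = fk t ((i:ℤ) - l) from rfl,
        ← fk_symm t ((l:ℤ) - i), show -((l:ℤ) - i) = (i:ℤ) - l by ring]
      ring
    rw [Finset.sum_congr rfl (fun l _ => this l),
      ← Finset.sum_range (fun j => d j * fk t ((j:ℤ) - i)), hdsum i i.isLt]
    rfl
  intro j
  rcases lt_trichotomy j (m+1) with h | h | h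
  · have := congrFun hv ⟨j, h⟩
    simpa [hd, sub_eq_zero] using this
  · subst h; rw [hc1, phi_self]
  · rw [hc2 j h, phi_gt t h]


/-- key computation: `L(z^{-k}(zΦ_m - β Φ_m^*))`. -/
lemma sum_szego (t : ℝ) (m : ℕ) (β : ℝ) (k : ℤ) :
    ∑ j ∈ Finset.range (m+2),
      ((if j = 0 then 0 else phi t m (j-1)) - β * (if j ≤ m then phi t m (m-j) else 0))
        * fk t ((j:ℤ) - k)
    = LL t (phi t m) (m+1) (k-1) - β * LL t (phi t m) (m+1) ((m:ℤ) - k) := by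
  simp only [sub_mul]
  rw [Finset.sum_sub_distrib]
  congr 1
  · rw [Finset.sum_range_succ' (fun j => (if j = 0 then (0:ℝ) else phi t m (j-1)) * fk t ((j:ℤ) - k)) (m+1), LL]
    have h0 : (if (0:ℕ) = 0 then (0:ℝ) else phi t m (0-1)) * fk t (((0:ℕ):ℤ) - k) = 0 := by simp
    rw [h0, add_zero]
    apply Finset.sum_congr rfl
    intro i _
    rw [if_neg (Nat.succ_ne_zero i), Nat.add_sub_cancel]
    have : ((i+1 : ℕ):ℤ) - k = (i:ℤ) - (k-1) := by push_cast; ring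
    rw [this]
  · rw [LL, Finset.mul_sum, Finset.sum_range_succ]
    rw [if_neg (by omega : ¬ m+1 ≤ m), mul_zero, zero_mul, add_zero]
    rw [← Finset.sum_range_reflect
      (fun l => β * (phi t m l * fk t ((l:ℤ) - ((m:ℤ) - k)))) (m+1)]
    apply Finset.sum_congr rfl
    intro j hj
    rw [Finset.mem_range] at hj
    rw [if_pos (by omega : j ≤ m), show m+1-1-j = m-j from by omega]
    have h2 : ((m - j : ℕ):ℤ) - ((m:ℤ) - k) = -( (j:ℤ) - k ) := by omega
    rw [h2, fk_symm]
    ring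

lemma hh_def (t : ℝ) (m : ℕ) : hh t m = LL t (phi t m) (m+1) (m:ℤ) := rfl

lemma szego_aux (t : ℝ) (m : ℕ) : ∀ j,
    (if j = 0 then (0:ℝ) else phi t m (j-1))
      - (LL t (phi t m) (m+1) (-1) / hh t m) * (if j ≤ m then phi t m (m-j) else 0)
    = phi t (m+1) j := by
  set β : ℝ := LL t (phi t m) (m+1) (-1) / hh t m with hβ
  apply phi_uniq t m
  · simp [phi_self]
  · intro j hj
    simp [phi_gt t (by omega : m < j - 1), if_neg (by omega : ¬ j ≤ m)]
  · intro k hk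
    rw [sum_szego t m β k]
    rcases Nat.eq_zero_or_pos k with h0 | h0
    · subst h0
      simp only [Nat.cast_zero, zero_sub, sub_zero]
      rw [hβ, ← hh_def, div_mul_cancel₀ _ (hh_pos t m).ne']
      exact sub_self _
    · rw [phi_orth t m ((k:ℤ)-1) (by omega) (by omega),
        phi_orth t m ((m:ℤ)-k) (by omega) (by omega), mul_zero, sub_zero]

lemma un_beta (t : ℝ) (m : ℕ) :
    Un (m+1) t = LL t (phi t m) (m+1) (-1) / hh t m := by
  rw [un_eq t (m+1) (by omega), ← szego_aux t m 0]
  simp [phi_self]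

lemma E1 (t : ℝ) (m : ℕ) : LL t (phi t m) (m+1) (-1) = Un (m+1) t * hh t m := by
  rw [un_beta, div_mul_cancel₀ _ (hh_pos t m).ne']

lemma szego (t : ℝ) (m : ℕ) : ∀ j,
    phi t (m+1) j = (if j = 0 then 0 else phi t m (j-1))
      - Un (m+1) t * (if j ≤ m then phi t m (m-j) else 0) := by
  intro j
  rw [un_beta, ← szego_aux t m j]

lemma h_ratio (t : ℝ) (m : ℕ) : hh t (m+1) = hh t m * (1 - Un (m+1) t ^ 2) := by
  have : hh t (m+1) = ∑ j ∈ Finset.range (m+2),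
      ((if j = 0 then 0 else phi t m (j-1))
        - Un (m+1) t * (if j ≤ m then phi t m (m-j) else 0)) * fk t ((j:ℤ) - ((m:ℤ)+1)) := by
    rw [hh, LL]
    apply Finset.sum_congr rfl
    intro j _
    rw [← szego t m j]
    norm_num
  rw [this, sum_szego t m (Un (m+1) t) ((m:ℤ)+1)]
  rw [show (m:ℤ)+1-1 = (m:ℤ) from by ring, show (m:ℤ) - ((m:ℤ)+1) = -1 from by ring]
  rw [E1 t m, ← hh]
  ring

lemma FE (t : ℝ) (c : ℕ → ℝ) (N : ℕ) (k : ℤ) :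
    ∑ j ∈ Finset.range N, ((j:ℝ) - (k:ℝ)) * (c j * fk t ((j:ℤ) - k))
      = t * (LL t c N (k+1) - LL t c N (k-1)) := by
  rw [LL, LL, ← Finset.sum_sub_distrib, Finset.mul_sum]
  apply Finset.sum_congr rfl
  intro j _
  have h := fk_rec t ((j:ℤ) - k)
  have e1 : (j:ℤ) - k - 1 = (j:ℤ) - (k+1) := by ring
  have e2 : (j:ℤ) - k + 1 = (j:ℤ) - (k-1) := by ring
  rw [e1, e2] at h
  have hcast : (((j:ℤ) - k : ℤ):ℝ) = (j:ℝ) - (k:ℝ) := by push_cast; ring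
  rw [hcast] at h
  linear_combination c j * h


lemma orth_vanish (t : ℝ) (N : ℕ) (d : ℕ → ℝ)
    (hd : ∀ k : ℕ, k < N → ∑ j ∈ Finset.range N, d j * fk t ((j:ℤ) - k) = 0) :
    ∀ j, j < N → d j = 0 := by
  have hv : (fun i : Fin N => d i) = 0 := by
    apply tmat_inj N t
    funext i
    rw [Matrix.mulVec, dotProduct]
    have hterm : ∀ l : Fin N, Tmat N t i l * d l = d l * fk t ((l:ℤ) - i) := by
      intro l
      rw [show Tmat N t i l = fk t ((i:ℤ) - l) from rfl,
        ← fk_symm t ((l:ℤ) - i), show -((l:ℤ) - i) = (i:ℤ) - l by ring]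
      ring
    rw [Finset.sum_congr rfl (fun l _ => hterm l),
      ← Finset.sum_range (fun j => d j * fk t ((j:ℤ) - i)), hd i i.isLt]
    rfl
  intro j hj
  exact congrFun hv ⟨j, hj⟩

lemma LL_rev (t : ℝ) (m : ℕ) (k : ℤ) :
    ∑ j ∈ Finset.range (m+1), phi t m (m - j) * fk t ((j:ℤ) - k)
      = LL t (phi t m) (m+1) ((m:ℤ) - k) := by
  rw [LL, ← Finset.sum_range_reflect (fun l => phi t m l * fk t ((l:ℤ) - ((m:ℤ)-k))) (m+1)]
  apply Finset.sum_congr rfl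
  intro j hj
  rw [Finset.mem_range] at hj
  rw [show m+1-1-j = m-j from by omega]
  have h2 : ((m - j : ℕ):ℤ) - ((m:ℤ) - k) = -( (j:ℤ) - k ) := by omega
  rw [h2, fk_symm]

/-- Discrete Painlevé II recurrence: (n/t)·U_n + (1 − U_n²)·(U_{n−1} + U_{n+1}) = 0. -/
theorem discrete_painleve_II (n : ℕ) (hn : 2 ≤ n) (t : ℝ) (ht : 0 < t) :
    ((n : ℝ) / t) * Un n t + (1 - (Un n t) ^ 2) * (Un (n - 1) t + Un (n + 1) t) = 0 := by
  obtain ⟨m, rfl⟩ : ∃ m, n = m + 2 := ⟨n - 2, by omega⟩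
  set a : ℝ := Un (m+2) t with ha
  set am : ℝ := Un (m+1) t with ham
  set ap : ℝ := Un (m+3) t with hap
  set H : ℝ := hh t (m+2) with hH
  set Hm : ℝ := hh t (m+1) with hHm
  set r : ℕ → ℝ := fun j => (((m:ℝ)+2) - (j:ℝ)) * phi t (m+2) j with hr
  -- values of L(z^{-k} r)
  have hLr : ∀ k : ℤ, LL t r (m+3) k
      = (((m:ℝ)+2) - (k:ℝ)) * LL t (phi t (m+2)) (m+3) k
        - t * (LL t (phi t (m+2)) (m+3) (k+1) - LL t (phi t (m+2)) (m+3) (k-1)) := by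
    intro k
    rw [← FE t (phi t (m+2)) (m+3) k, LL, LL, Finset.mul_sum, ← Finset.sum_sub_distrib]
    apply Finset.sum_congr rfl
    intro j _
    show (((m:ℝ)+2) - (j:ℝ)) * phi t (m+2) j * fk t ((j:ℤ) - k) = _
    ring
  have horth : ∀ k : ℤ, 0 ≤ k → k < ((m:ℤ)+2) → LL t (phi t (m+2)) (m+3) k = 0 := by
    intro k h0 h1
    exact phi_orth t (m+2) k h0 (by push_cast; omega)
  have hLtop : LL t (phi t (m+2)) (m+3) ((m:ℤ)+2) = H := by
    rw [hH, hh_def]; norm_num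
  have hLneg : LL t (phi t (m+2)) (m+3) (-1) = ap * H := by
    have := E1 t (m+2)
    rw [hap, hH]
    convert this using 2
  have hLr0 : LL t r (m+3) 0 = t * (ap * H) := by
    rw [hLr 0, show (0:ℤ)+1 = 1 from rfl, show (0:ℤ)-1 = -1 from rfl,
      horth 0 le_rfl (by omega), horth 1 (by omega) (by omega), hLneg]
    ring
  have hLrn1 : LL t r (m+3) ((m:ℤ)+1) = -(t * H) := by
    have z1 := horth ((m:ℤ)+1) (by omega) (by omega)
    have z2 := horth ((m:ℤ)+1-1) (by omega) (by omega)
    rw [hLr ((m:ℤ)+1), z1, show (m:ℤ)+1+1 = (m:ℤ)+2 from by ring, hLtop, z2]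
    ring
  have hLrmid : ∀ k : ℤ, 1 ≤ k → k ≤ (m:ℤ) → LL t r (m+3) k = 0 := by
    intro k h1 h2
    rw [hLr k, horth k (by omega) (by omega), horth (k+1) (by omega) (by omega),
      horth (k-1) (by omega) (by omega)]
    ring
  -- the vanishing combination
  have hHmne : Hm ≠ 0 := (hh_pos t (m+1)).ne'
  set A : ℝ := -(t*H)/Hm with hA
  set B : ℝ := t*ap*H/Hm with hB
  set d : ℕ → ℝ := fun j => r j - A * phi t (m+1) j
    - B * (if j ≤ m+1 then phi t (m+1) (m+1-j) else 0) with hd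
  have hone : LL t (phi t (m+1)) (m+2) ((m:ℤ)+1) = Hm := by
    rw [hHm, hh_def]; norm_num
  have horthm : ∀ k' : ℤ, 0 ≤ k' → k' < ((m:ℤ)+1) → LL t (phi t (m+1)) (m+2) k' = 0 := by
    intro k' h0 h1
    exact phi_orth t (m+1) k' h0 (by push_cast; omega)
  have hABval : A * Hm = -(t*H) ∧ B * Hm = t*ap*H := by
    constructor
    · rw [hA]; field_simp
    · rw [hB]; field_simp
  have hdzero : ∀ j, j < m+2 → d j = 0 := by
    apply orth_vanish t (m+2) d
    intro k hk
    have e1 : LL t r (m+3) (k:ℤ) = ∑ j ∈ Finset.range (m+2), r j * fk t ((j:ℤ) - k) := by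
      rw [LL, Finset.sum_range_succ]
      have : r (m+2) = 0 := by rw [hr]; push_cast; ring
      rw [this, zero_mul, add_zero]
    have e3 : ∑ j ∈ Finset.range (m+2),
        (if j ≤ m+1 then phi t (m+1) (m+1-j) else 0) * fk t ((j:ℤ) - k)
        = LL t (phi t (m+1)) (m+2) ((m:ℤ)+1 - k) := by
      rw [LL, ← Finset.sum_range_reflect
        (fun l => phi t (m+1) l * fk t ((l:ℤ) - ((m:ℤ)+1-(k:ℤ)))) (m+2)]
      apply Finset.sum_congr rfl
      intro j hj
      rw [Finset.mem_range] at hj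
      rw [if_pos (by omega : j ≤ m+1), show m+2-1-j = m+1-j from by omega]
      have h2 : ((m+1-j : ℕ):ℤ) - ((m:ℤ)+1-(k:ℤ)) = -((j:ℤ) - (k:ℤ)) := by omega
      rw [h2, fk_symm]
    have hsplit : ∑ j ∈ Finset.range (m+2), d j * fk t ((j:ℤ) - k)
        = LL t r (m+3) (k:ℤ) - A * LL t (phi t (m+1)) (m+2) (k:ℤ)
          - B * LL t (phi t (m+1)) (m+2) ((m:ℤ)+1 - k) := by
      rw [e1, ← e3, LL, Finset.mul_sum, Finset.mul_sum, ← Finset.sum_sub_distrib,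
        ← Finset.sum_sub_distrib]
      apply Finset.sum_congr rfl
      intro j _
      simp only [hd]
      ring
    rw [hsplit]
    rcases Nat.eq_zero_or_pos k with h0 | h0
    · subst h0
      rw [show ((0:ℕ):ℤ) = 0 from rfl, sub_zero, hLr0, horthm 0 le_rfl (by omega), hone,
        hABval.2]
      ring
    · rcases eq_or_lt_of_le (show k ≤ m+1 from by omega) with hkm | hkm
      · subst hkm
        rw [show ((m+1:ℕ):ℤ) = (m:ℤ)+1 from by push_cast; ring, hLrn1, hone, sub_self,
          horthm 0 le_rfl (by omega), hABval.1]
        ring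
      · rw [hLrmid (k:ℤ) (by omega) (by omega), horthm (k:ℤ) (by omega) (by omega),
          horthm ((m:ℤ)+1 - k) (by omega) (by omega)]
        ring
  -- extract the constant coefficient
  have hd0 := hdzero 0 (by omega)
  rw [hd] at hd0
  simp only [hr] at hd0
  have hphi2 : phi t (m+2) 0 = -a := by
    rw [ha, un_eq t (m+2) (by omega)]; ring
  have hphi1 : phi t (m+1) 0 = -am := by
    rw [ham, un_eq t (m+1) (by omega)]; ring
  rw [if_pos (by omega : 0 ≤ m+1)] at hd0
  rw [show m+1-0 = m+1 from rfl, phi_self, hphi2, hphi1] at hd0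
  -- h ratio
  have hrat : H = Hm * (1 - a^2) := by
    rw [hH, hHm, ha]
    exact h_ratio t (m+1)
  have hAval : A = -(t*(1-a^2)) := by
    rw [hA, hrat]
    field_simp
  have hBval : B = t*ap*(1-a^2) := by
    rw [hB, hrat]
    field_simp
  rw [hAval, hBval] at hd0
  have key : ((m:ℝ)+2) * a + t * (1-a^2) * (am + ap) = 0 := by
    push_cast at hd0
    linear_combination -hd0
  show ((m+2:ℕ):ℝ)/t * a + (1-a^2) * (Un (m+1) t + ap) = 0
  rw [← ham]
  have ht' : t ≠ 0 := ht.ne'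
  field_simp
  linear_combination (norm := (push_cast; ring)) key
end

section
/- For every integer n ≥ 1, as t → 0 one has U_n(t) = (−1)^{n+1}·t^n/n! + O(t^{n+1}); in particular lim_{t→0} U_n(t)/t^n = (−1)^{n+1}/n!, and consequently 1 − U_n(t)² = 1 − t^{2n}/(n!)² + O(t^{2n+1}). -/
open MeasureTheory Matrix Filter

open Asymptotics

noncomputable def cInt (m k : ℕ) : ℝ :=
  ∫ θ in (0:ℝ)..(2*Real.pi), (Real.cos θ)^m * Real.cos (k*θ)

lemma integral_cos_nat_mul (k : ℕ) (hk : k ≠ 0) :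
    ∫ θ in (0:ℝ)..(2*Real.pi), Real.cos (k*θ) = 0 := by
  have h := intervalIntegral.integral_comp_mul_left (a := (0:ℝ)) (b := 2*Real.pi)
    (fun x => Real.cos x) (c := (k:ℝ)) (by exact_mod_cast hk)
  simp only [integral_cos, mul_zero, Real.sin_zero] at h
  rw [h]
  have : (k:ℝ) * (2*Real.pi) = (2*k : ℕ) * Real.pi := by push_cast; ring
  rw [this, Real.sin_nat_mul_pi]
  simp

lemma cInt_rec (m k : ℕ) :
    cInt (m+1) (k+1) = (cInt m (k+2) + cInt m k)/2 := by
  unfold cInt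
  have key : ∀ θ : ℝ, (Real.cos θ)^(m+1) * Real.cos ((k+1:ℕ)*θ)
      = ((Real.cos θ)^m * Real.cos ((k+2:ℕ)*θ) + (Real.cos θ)^m * Real.cos ((k:ℕ)*θ))/2 := by
    intro θ
    have h := Real.two_mul_cos_mul_cos θ (((k:ℝ)+1)*θ)
    have h1 : θ - ((k:ℝ)+1)*θ = -((k:ℝ)*θ) := by ring
    have h2 : θ + ((k:ℝ)+1)*θ = ((k:ℝ)+2)*θ := by ring
    rw [h1, h2, Real.cos_neg] at h
    push_cast
    have : Real.cos θ ^ (m+1) = Real.cos θ ^ m * Real.cos θ := by ring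
    rw [this, mul_assoc]
    rw [show Real.cos θ * Real.cos (((k:ℝ)+1)*θ) = (Real.cos ((k:ℝ)*θ) + Real.cos (((k:ℝ)+2)*θ))/2 by linarith]
    ring
  simp_rw [key]
  rw [intervalIntegral.integral_div]
  rw [intervalIntegral.integral_add ((Continuous.fun_mul (by fun_prop) (by fun_prop)).intervalIntegrable _ _) ((Continuous.fun_mul (by fun_prop) (by fun_prop)).intervalIntegrable _ _)]

lemma cInt_eq_zero (m k : ℕ) (h : m < k) : cInt m k = 0 := by
  induction m generalizing k with
  | zero =>
    unfold cInt
    simpa using integral_cos_nat_mul k (by omega)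
  | succ m ih =>
    obtain ⟨k', rfl⟩ : ∃ k', k = k'+1 := ⟨k-1, by omega⟩
    rw [cInt_rec, ih (k'+2) (by omega), ih k' (by omega)]
    norm_num

lemma cInt_diag (k : ℕ) : cInt k k = 2*Real.pi/2^k := by
  induction k with
  | zero => unfold cInt; simp
  | succ k ih =>
    rw [cInt_rec, ih, cInt_eq_zero k (k+2) (by omega)]
    ring

noncomputable def lead (m : ℤ) (t : ℝ) : ℝ := t^(m.natAbs) / (Nat.factorial m.natAbs : ℝ)

lemma fk_cos_natAbs (t : ℝ) (k : ℤ) :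
    fk t k = (1 / (2 * Real.pi)) *
      ∫ θ in (0:ℝ)..(2 * Real.pi), Real.exp (2 * t * Real.cos θ) * Real.cos ((k.natAbs : ℝ) * θ) := by
  unfold fk
  congr 1
  apply intervalIntegral.integral_congr
  intro θ _
  have habs : (k.natAbs:ℝ) = |(k:ℝ)| := by
    simp [Nat.cast_natAbs, Int.cast_abs]
  have hcos : ((k:ℝ)) = (k.natAbs:ℝ) ∨ ((k:ℝ)) = -(k.natAbs:ℝ) := by
    rw [habs]; rcases abs_cases ((k:ℝ)) with ⟨h,_⟩|⟨h,_⟩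
    · left; rw [h]
    · right; rw [h]; ring
  rcases hcos with h | h
  · rw [h]
  · dsimp only; rw [h, neg_mul, Real.cos_neg]

lemma fk_bound (k : ℤ) (t : ℝ) (ht : |t| ≤ 1/2) :
    |fk t k - t^(k.natAbs)/(Nat.factorial k.natAbs : ℝ)|
      ≤ 2^(k.natAbs+1) * ((k.natAbs+2) / ((Nat.factorial (k.natAbs+1)) * (k.natAbs+1))) * |t|^(k.natAbs+1) := by
  set K := k.natAbs with hK
  rw [fk_cos_natAbs]
  -- split integral
  have hint1 : ∀ i : ℕ, IntervalIntegrable (fun θ => (2*t*Real.cos θ)^i * Real.cos ((K:ℝ)*θ))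
      volume 0 (2*Real.pi) := fun i => (Continuous.mul (by fun_prop) (by fun_prop)).intervalIntegrable _ _
  have hintS : IntervalIntegrable (fun θ => (∑ i ∈ Finset.range (K+1), (2*t*Real.cos θ)^i / (Nat.factorial i : ℝ)) * Real.cos ((K:ℝ)*θ))
      volume 0 (2*Real.pi) := (Continuous.mul (by fun_prop) (by fun_prop)).intervalIntegrable _ _
  have hintE : IntervalIntegrable (fun θ => Real.exp (2*t*Real.cos θ) * Real.cos ((K:ℝ)*θ))
      volume 0 (2*Real.pi) := (Continuous.mul (by fun_prop) (by fun_prop)).intervalIntegrable _ _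
  have hsplit : (∫ θ in (0:ℝ)..(2*Real.pi), Real.exp (2*t*Real.cos θ) * Real.cos ((K:ℝ)*θ))
      = (∫ θ in (0:ℝ)..(2*Real.pi), (∑ i ∈ Finset.range (K+1), (2*t*Real.cos θ)^i / (Nat.factorial i : ℝ)) * Real.cos ((K:ℝ)*θ))
        + (∫ θ in (0:ℝ)..(2*Real.pi), (Real.exp (2*t*Real.cos θ) - ∑ i ∈ Finset.range (K+1), (2*t*Real.cos θ)^i / (Nat.factorial i : ℝ)) * Real.cos ((K:ℝ)*θ)) := by
    have hintB : IntervalIntegrable (fun θ => (Real.exp (2*t*Real.cos θ) - ∑ i ∈ Finset.range (K+1), (2*t*Real.cos θ)^i / (Nat.factorial i : ℝ)) * Real.cos ((K:ℝ)*θ)) volume 0 (2*Real.pi) := by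
      apply Continuous.intervalIntegrable
      apply Continuous.mul _ (by fun_prop)
      apply Continuous.sub (by fun_prop)
      exact continuous_finset_sum _ (fun i _ => by fun_prop)
    rw [← intervalIntegral.integral_add hintS hintB]
    apply intervalIntegral.integral_congr
    intro θ _; dsimp only; ring
  -- value of the main integral
  have hmain : (∫ θ in (0:ℝ)..(2*Real.pi), (∑ i ∈ Finset.range (K+1), (2*t*Real.cos θ)^i / (Nat.factorial i : ℝ)) * Real.cos ((K:ℝ)*θ))
      = 2*Real.pi * (t^K / (Nat.factorial K : ℝ)) := by
    have : ∀ θ : ℝ, (∑ i ∈ Finset.range (K+1), (2*t*Real.cos θ)^i / (Nat.factorial i : ℝ)) * Real.cos ((K:ℝ)*θ)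
        = ∑ i ∈ Finset.range (K+1), ((2*t)^i / (Nat.factorial i : ℝ)) * ((Real.cos θ)^i * Real.cos ((K:ℝ)*θ)) := by
      intro θ
      rw [Finset.sum_mul]
      congr 1; ext i; rw [mul_pow]; ring
    simp_rw [this]
    rw [intervalIntegral.integral_finset_sum (fun i _ => ((Continuous.fun_mul (by fun_prop) (Continuous.fun_mul (by fun_prop) (by fun_prop))).intervalIntegrable (μ := volume) 0 (2*Real.pi)))]
    have : ∀ i ∈ Finset.range (K+1), (∫ θ in (0:ℝ)..(2*Real.pi), ((2*t)^i / (Nat.factorial i : ℝ)) * ((Real.cos θ)^i * Real.cos ((K:ℝ)*θ)))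
        = ((2*t)^i / (Nat.factorial i : ℝ)) * cInt i K := by
      intro i _
      rw [intervalIntegral.integral_const_mul]; rfl
    rw [Finset.sum_congr rfl this]
    have : ∀ i ∈ Finset.range K, ((2*t)^i / (Nat.factorial i : ℝ)) * cInt i K = 0 := by
      intro i hi
      rw [cInt_eq_zero i K (Finset.mem_range.mp hi), mul_zero]
    rw [Finset.sum_range_succ, Finset.sum_eq_zero this, zero_add, cInt_diag]
    rw [mul_pow]
    field_simp
  -- bound the error integral
  have herr : |∫ θ in (0:ℝ)..(2*Real.pi), (Real.exp (2*t*Real.cos θ) - ∑ i ∈ Finset.range (K+1), (2*t*Real.cos θ)^i / (Nat.factorial i : ℝ)) * Real.cos ((K:ℝ)*θ)|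
      ≤ ((2*|t|)^(K+1) * ((K+2) / ((Nat.factorial (K+1)) * (K+1)))) * |2*Real.pi - 0| := by
    rw [← Real.norm_eq_abs]
    apply intervalIntegral.norm_integral_le_of_norm_le_const
    intro θ _
    rw [Real.norm_eq_abs, abs_mul]
    have hx : |2*t*Real.cos θ| ≤ 1 := by
      rw [abs_mul, abs_mul, abs_two]
      have h1 := Real.abs_cos_le_one θ
      nlinarith [abs_nonneg t, abs_nonneg (Real.cos θ), ht]
    have hb := Real.exp_bound hx (n := K+1) (by omega)
    have h1 : |Real.exp (2*t*Real.cos θ) - ∑ i ∈ Finset.range (K+1), (2*t*Real.cos θ)^i / (Nat.factorial i : ℝ)|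
        ≤ (2*|t|)^(K+1) * ((K+2) / ((Nat.factorial (K+1)) * (K+1))) := by
      refine hb.trans ?_
      have hpow : |2*t*Real.cos θ|^(K+1) ≤ (2*|t|)^(K+1) := by
        apply pow_le_pow_left₀ (abs_nonneg _) _
        rw [abs_mul, abs_mul, abs_two]
        have h1 := Real.abs_cos_le_one θ
        nlinarith [abs_nonneg t, abs_nonneg (Real.cos θ)]
      have hcoef : (((K+1).succ : ℕ) : ℝ) / ((Nat.factorial (K+1) : ℝ) * (((K+1:ℕ)):ℝ)) = ((K:ℝ)+2)/((Nat.factorial (K+1) : ℝ)*((K:ℝ)+1)) := by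
        push_cast; ring_nf
      calc |2*t*Real.cos θ|^(K+1) * ((((K+1).succ : ℕ):ℝ) / ((Nat.factorial (K+1) : ℝ) * (((K+1:ℕ)):ℝ)))
          ≤ (2*|t|)^(K+1) * ((((K+1).succ : ℕ):ℝ) / ((Nat.factorial (K+1) : ℝ) * (((K+1:ℕ)):ℝ))) :=
            mul_le_mul_of_nonneg_right hpow (by positivity)
        _ = (2*|t|)^(K+1) * ((K+2) / ((Nat.factorial (K+1)) * (K+1))) := by rw [hcoef]
    calc |Real.exp (2*t*Real.cos θ) - ∑ i ∈ Finset.range (K+1), (2*t*Real.cos θ)^i / (Nat.factorial i : ℝ)| * |Real.cos ((K:ℝ)*θ)|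
        ≤ ((2*|t|)^(K+1) * ((K+2) / ((Nat.factorial (K+1)) * (K+1)))) * 1 := by
          apply mul_le_mul h1 (Real.abs_cos_le_one _) (abs_nonneg _) (by positivity)
      _ = (2*|t|)^(K+1) * ((K+2) / ((Nat.factorial (K+1)) * (K+1))) := mul_one _
  -- assemble
  rw [hsplit, hmain]
  have hπ : (0:ℝ) < 2*Real.pi := by positivity
  rw [mul_add]
  have heq : 1 / (2*Real.pi) * (2*Real.pi * (t^K / (Nat.factorial K : ℝ))) = t^K / (Nat.factorial K : ℝ) := by
    field_simp
  rw [heq, add_sub_cancel_left, abs_mul]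
  have h2 : |1/(2*Real.pi)| = 1/(2*Real.pi) := abs_of_pos (by positivity)
  rw [h2]
  have h3 : |2*Real.pi - 0| = 2*Real.pi := by rw [sub_zero]; exact abs_of_pos hπ
  rw [h3] at herr
  calc 1/(2*Real.pi) * |∫ θ in (0:ℝ)..(2*Real.pi), (Real.exp (2*t*Real.cos θ) - ∑ i ∈ Finset.range (K+1), (2*t*Real.cos θ)^i / (Nat.factorial i : ℝ)) * Real.cos ((K:ℝ)*θ)|
      ≤ 1/(2*Real.pi) * ((2*|t|)^(K+1) * ((K+2) / ((Nat.factorial (K+1)) * (K+1))) * (2*Real.pi)) :=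
        mul_le_mul_of_nonneg_left herr (by positivity)
    _ = 2^(K+1) * ((K+2) / ((Nat.factorial (K+1)) * (K+1))) * |t|^(K+1) := by
        rw [mul_pow]; field_simp

lemma pow_isBigO_pow {a b : ℕ} (h : b ≤ a) :
    (fun t : ℝ => t^a) =O[nhds 0] (fun t => t^b) := by
  rw [isBigO_iff]
  refine ⟨1, ?_⟩
  have hev : ∀ᶠ t : ℝ in nhds 0, |t| < 1 := by
    filter_upwards [Metric.ball_mem_nhds (0:ℝ) one_pos] with t ht
    simpa [Real.dist_eq] using ht
  filter_upwards [hev] with t ht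
  simp only [Real.norm_eq_abs, abs_pow, one_mul]
  exact pow_le_pow_of_le_one (abs_nonneg t) ht.le h

lemma fk_sub_lead_isBigO (k : ℤ) :
    (fun t : ℝ => fk t k - lead k t) =O[nhds 0] fun t => t^(k.natAbs+1) := by
  rw [isBigO_iff]
  refine ⟨2^(k.natAbs+1) * ((k.natAbs+2) / ((Nat.factorial (k.natAbs+1)) * (k.natAbs+1))), ?_⟩
  have hev : ∀ᶠ t : ℝ in nhds 0, |t| ≤ 1/2 := by
    filter_upwards [Metric.ball_mem_nhds (0:ℝ) (by norm_num : (0:ℝ) < 1/2)] with t ht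
    rw [Metric.mem_ball, Real.dist_eq, sub_zero] at ht
    exact ht.le
  filter_upwards [hev] with t ht
  have := fk_bound k t ht
  simpa [Real.norm_eq_abs, abs_pow, lead] using this

lemma lead_isBigO (k : ℤ) : (lead k) =O[nhds 0] fun t : ℝ => t^(k.natAbs) := by
  apply IsBigO.of_bound ((Nat.factorial k.natAbs : ℝ))⁻¹
  filter_upwards with t
  rw [lead, Real.norm_eq_abs, Real.norm_eq_abs, abs_div, abs_pow]
  rw [abs_of_nonneg (by positivity : (0:ℝ) ≤ (Nat.factorial k.natAbs : ℝ))]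
  rw [div_eq_inv_mul]

lemma fk_isBigO (k : ℤ) : (fun t => fk t k) =O[nhds 0] fun t : ℝ => t^(k.natAbs) := by
  have h1 := (fk_sub_lead_isBigO k).trans (pow_isBigO_pow (Nat.le_succ _))
  have := h1.add (lead_isBigO k)
  simpa using this

lemma prod_isBigO {ι : Type*} [DecidableEq ι] (s : Finset ι) (f : ι → ℝ → ℝ) (w : ι → ℕ)
    (hf : ∀ i ∈ s, (f i) =O[nhds 0] fun t : ℝ => t^(w i)) :
    (fun t => ∏ i ∈ s, f i t) =O[nhds 0] fun t : ℝ => t^(∑ i ∈ s, w i) := by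
  induction s using Finset.induction with
  | empty =>
    simp only [Finset.prod_empty, Finset.sum_empty, pow_zero]
    exact isBigO_const_const (1:ℝ) one_ne_zero _
  | insert _ _ ha ih =>
    rename_i a s
    simp only [Finset.prod_insert ha, Finset.sum_insert ha, pow_add]
    exact (hf a (Finset.mem_insert_self a s)).mul
      (ih (fun i hi => hf i (Finset.mem_insert_of_mem hi)))

lemma prod_sub_prod_isBigO {ι : Type*} [DecidableEq ι] (s : Finset ι) (f p : ι → ℝ → ℝ) (w : ι → ℕ)
    (hf : ∀ i ∈ s, (f i) =O[nhds 0] fun t : ℝ => t^(w i))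
    (hp : ∀ i ∈ s, (p i) =O[nhds 0] fun t : ℝ => t^(w i))
    (hd : ∀ i ∈ s, (fun t => f i t - p i t) =O[nhds 0] fun t : ℝ => t^(w i + 1)) :
    (fun t => (∏ i ∈ s, f i t) - ∏ i ∈ s, p i t) =O[nhds 0]
      fun t : ℝ => t^((∑ i ∈ s, w i) + 1) := by
  induction s using Finset.induction with
  | empty =>
    simp only [Finset.prod_empty, Finset.sum_empty]
    exact (isBigO_zero _ _).congr (fun t => by simp) (fun _ => rfl)
  | insert _ _ ha ih =>
    rename_i a s
    simp only [Finset.prod_insert ha, Finset.sum_insert ha]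
    have key : ∀ t : ℝ, f a t * ∏ i ∈ s, f i t - p a t * ∏ i ∈ s, p i t
        = (f a t - p a t) * ∏ i ∈ s, f i t + p a t * ((∏ i ∈ s, f i t) - ∏ i ∈ s, p i t) := by
      intro t; ring
    simp only [key]
    have h1 : (fun t => (f a t - p a t) * ∏ i ∈ s, f i t) =O[nhds 0]
        fun t : ℝ => t^(w a + ∑ i ∈ s, w i + 1) := by
      have h := (hd a (Finset.mem_insert_self a s)).mul
        (prod_isBigO s f w (fun i hi => hf i (Finset.mem_insert_of_mem hi)))
      have heq : (fun x : ℝ => x ^ (w a + 1) * x ^ (∑ i ∈ s, w i))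
          = fun t : ℝ => t ^ (w a + ∑ i ∈ s, w i + 1) := by
        funext x; rw [← pow_add]; ring_nf
      exact heq ▸ h
    have h2 : (fun t => p a t * ((∏ i ∈ s, f i t) - ∏ i ∈ s, p i t)) =O[nhds 0]
        fun t : ℝ => t^(w a + ∑ i ∈ s, w i + 1) := by
      have h := (hp a (Finset.mem_insert_self a s)).mul
        (ih (fun i hi => hf i (Finset.mem_insert_of_mem hi))
            (fun i hi => hp i (Finset.mem_insert_of_mem hi))
            (fun i hi => hd i (Finset.mem_insert_of_mem hi)))
      have heq : (fun x : ℝ => x ^ (w a) * x ^ ((∑ i ∈ s, w i) + 1))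
          = fun t : ℝ => t ^ (w a + ∑ i ∈ s, w i + 1) := by
        funext x; rw [← pow_add]; ring_nf
      exact heq ▸ h
    exact h1.add h2

noncomputable def Bmat (n : ℕ) (c : Fin n → ℤ) : Matrix (Fin n) (Fin n) ℝ :=
  Matrix.of fun j k => if c k ≤ (j:ℤ) then ((Nat.factorial ((j:ℤ) - c k).toNat : ℝ))⁻¹ else 0

lemma sumsigma (n : ℕ) (c : Fin n → ℤ) (w : ℕ)
    (hsum : (∑ j : Fin n, ((j:ℤ) - c j)) = w) (σ : Equiv.Perm (Fin n)) :
    (∑ j : Fin n, (((σ j):ℤ) - c j)) = (w:ℤ) := by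
  rw [Finset.sum_sub_distrib] at hsum ⊢
  rw [Equiv.sum_comp σ (fun j : Fin n => ((j:ℤ)))]
  exact hsum

lemma natAbs_cast_sum (n : ℕ) (d : Fin n → ℤ) :
    ((∑ j : Fin n, (d j).natAbs : ℕ) : ℤ) = ∑ j : Fin n, |d j| := by
  push_cast
  rfl

lemma weight_ge (n : ℕ) (c : Fin n → ℤ) (w : ℕ)
    (hsum : (∑ j : Fin n, ((j:ℤ) - c j)) = w) (σ : Equiv.Perm (Fin n)) :
    w ≤ ∑ j : Fin n, (((σ j):ℤ) - c j).natAbs := by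
  have hsumσ := sumsigma n c w hsum σ
  have h1 : (w:ℤ) ≤ ∑ j : Fin n, |(((σ j):ℤ) - c j)| := by
    rw [← hsumσ]
    exact Finset.sum_le_sum (fun j _ => le_abs_self _)
  have h2 : ((∑ j : Fin n, ((((σ j):ℤ)) - c j).natAbs : ℕ) : ℤ) = ∑ j : Fin n, |(((σ j):ℤ)) - c j| :=
    natAbs_cast_sum n _
  omega

lemma det_fk_asymp (n : ℕ) (c : Fin n → ℤ) (w : ℕ)
    (hsum : (∑ j : Fin n, ((j:ℤ) - c j)) = w) :
    (fun t => Matrix.det (Matrix.of fun j k : Fin n => fk t ((j:ℤ) - c k))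
        - t^w * (Bmat n c).det) =O[nhds 0] fun t : ℝ => t^(w+1) := by
  have step1 : (fun t => Matrix.det (Matrix.of fun j k : Fin n => fk t ((j:ℤ) - c k))
      - Matrix.det (Matrix.of fun j k : Fin n => lead ((j:ℤ) - c k) t)) =O[nhds 0]
      fun t : ℝ => t^(w+1) := by
    simp only [Matrix.det_apply', Matrix.of_apply]
    simp only [← Finset.sum_sub_distrib, ← mul_sub]
    apply IsBigO.fun_sum
    intro σ _
    apply IsBigO.const_mul_left
    have hterm := prod_sub_prod_isBigO Finset.univ
      (fun i t => fk t (((σ i):ℤ) - c i)) (fun i t => lead (((σ i):ℤ) - c i) t)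
      (fun i => (((σ i):ℤ) - c i).natAbs)
      (fun i _ => fk_isBigO _) (fun i _ => lead_isBigO _) (fun i _ => fk_sub_lead_isBigO _)
    refine hterm.trans (pow_isBigO_pow ?_)
    have h := weight_ge n c w hsum σ
    have : (∑ i : Fin n, (fun i => ((((σ i):ℤ)) - c i).natAbs) i) = ∑ j : Fin n, ((((σ j):ℤ)) - c j).natAbs := rfl
    omega
  have step2 : (fun t => Matrix.det (Matrix.of fun j k : Fin n => lead ((j:ℤ) - c k) t)
      - t^w * (Bmat n c).det) =O[nhds 0] fun t : ℝ => t^(w+1) := by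
    simp only [Matrix.det_apply', Matrix.of_apply, Bmat, Finset.mul_sum]
    simp only [← Finset.sum_sub_distrib]
    apply IsBigO.fun_sum
    intro σ _
    have hsumσ := sumsigma n c w hsum σ
    by_cases hcase : ∀ j : Fin n, c j ≤ ((σ j):ℤ)
    · -- difference is identically zero
      have hzero : ∀ t : ℝ, (Equiv.Perm.sign σ : ℝ) * ∏ i, lead (((σ i):ℤ) - c i) t
          - t^w * ((Equiv.Perm.sign σ : ℝ) *
            ∏ i, (if c i ≤ ((σ i):ℤ) then ((Nat.factorial (((σ i):ℤ) - c i).toNat : ℝ))⁻¹ else 0)) = 0 := by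
        intro t
        have hnat : (∑ j : Fin n, (((σ j):ℤ) - c j).natAbs) = w := by
          have h2 : ((∑ j : Fin n, ((((σ j):ℤ)) - c j).natAbs : ℕ) : ℤ) = ∑ j : Fin n, |(((σ j):ℤ)) - c j| :=
            natAbs_cast_sum n _
          have h3 : (∑ j : Fin n, |(((σ j):ℤ) - c j)|) = (w:ℤ) := by
            rw [← hsumσ]
            exact Finset.sum_congr rfl (fun j _ => abs_of_nonneg (sub_nonneg.mpr (hcase j)))
          omega
        have hprod : (∏ i, lead (((σ i):ℤ) - c i) t)
            = t^w * ∏ i, ((Nat.factorial (((σ i):ℤ) - c i).toNat : ℝ))⁻¹ := by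
          unfold lead
          rw [← hnat]
          rw [← Finset.prod_pow_eq_pow_sum, ← Finset.prod_mul_distrib]
          apply Finset.prod_congr rfl
          intro i _
          have h3 : (((σ i):ℤ) - c i).natAbs = (((σ i):ℤ) - c i).toNat := by
            have := hcase i; omega
          rw [h3, div_eq_mul_inv]
        have hif : ∀ i : Fin n, (if c i ≤ ((σ i):ℤ) then ((Nat.factorial (((σ i):ℤ) - c i).toNat : ℝ))⁻¹ else 0)
            = ((Nat.factorial (((σ i):ℤ) - c i).toNat : ℝ))⁻¹ := fun i => if_pos (hcase i)
        simp only [hif]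
        rw [hprod]; ring
      exact (isBigO_zero _ _).congr (fun t => (hzero t).symm) (fun _ => rfl)
    · push_neg at hcase
      obtain ⟨j0, hj0⟩ := hcase
      have hzero : (∏ i, (if c i ≤ ((σ i):ℤ) then ((Nat.factorial (((σ i):ℤ) - c i).toNat : ℝ))⁻¹ else 0)) = 0 :=
        Finset.prod_eq_zero (Finset.mem_univ j0) (if_neg (by omega))
      have hW : w + 1 ≤ ∑ j : Fin n, (((σ j):ℤ) - c j).natAbs := by
        have h2 : (1:ℤ) ≤ ∑ j : Fin n, (|(((σ j):ℤ) - c j)| - ((((σ j):ℤ)) - c j)) := by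
          have hle := Finset.single_le_sum
            (f := fun j : Fin n => |(((σ j):ℤ) - c j)| - ((((σ j):ℤ)) - c j))
            (fun j _ => sub_nonneg.mpr (le_abs_self _))
            (Finset.mem_univ j0)
          have hle' : |(((σ j0):ℤ)) - c j0| - ((((σ j0):ℤ)) - c j0)
              ≤ ∑ x : Fin n, (|(((σ x):ℤ)) - c x| - ((((σ x):ℤ)) - c x)) := hle
          have hst : (1:ℤ) ≤ |(((σ j0):ℤ) - c j0)| - ((((σ j0):ℤ)) - c j0) := by
            rw [abs_of_neg (by omega : ((((σ j0):ℤ)) - c j0) < 0)]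
            omega
          linarith [hle', hst]
        rw [Finset.sum_sub_distrib, hsumσ] at h2
        have h3 : ((∑ j : Fin n, ((((σ j):ℤ)) - c j).natAbs : ℕ) : ℤ) = ∑ j : Fin n, |(((σ j):ℤ)) - c j| :=
          natAbs_cast_sum n _
        omega
      have hprodO := prod_isBigO Finset.univ (fun i t => lead (((σ i):ℤ) - c i) t)
        (fun i => (((σ i):ℤ) - c i).natAbs) (fun i _ => lead_isBigO _)
      have := (hprodO.trans (pow_isBigO_pow hW)).const_mul_left ((Equiv.Perm.sign σ : ℝ))
      refine this.congr (fun t => ?_) (fun _ => rfl)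
      rw [hzero]; ring
  have := step1.add step2
  simpa using this

def cD (n : ℕ) : Fin n → ℤ := fun k => (k:ℤ)
def cN (n : ℕ) : Fin n → ℤ := fun k => if (k:ℕ) = n - 1 then -1 else (k:ℕ)

lemma det_Bmat_cD (n : ℕ) : (Bmat n (cD n)).det = 1 := by
  have htri : (Bmat n (cD n)).BlockTriangular OrderDual.toDual := by
    intro i j hij
    have h : (i:ℕ) < (j:ℕ) := hij
    exact if_neg (by simp only [cD]; omega)
  rw [Matrix.det_of_lowerTriangular _ htri]
  apply Finset.prod_eq_one
  intro i _
  simp [Bmat, cD]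

noncomputable def Amat (n : ℕ) : Matrix (Fin n) (Fin n) ℝ :=
  Matrix.of fun j i => if (i:ℕ) ≤ (j:ℕ) then
    (-1:ℝ)^((j:ℕ)-(i:ℕ)) * ((Nat.factorial ((j:ℕ)-(i:ℕ)) : ℝ))⁻¹ else 0

noncomputable def wv (n : ℕ) (j : Fin n) : ℝ :=
  ∑ i ∈ Finset.range ((j:ℕ)+1),
    (-1:ℝ)^((j:ℕ)-i) / (Nat.factorial ((j:ℕ)-i) * Nat.factorial (i+1))

noncomputable def Emat (n : ℕ) : Matrix (Fin n) (Fin n) ℝ :=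
  Matrix.of fun j k => if (k:ℕ) = n-1 then wv n j else (if (j:ℕ) = (k:ℕ) then 1 else 0)

lemma cast_inv_factorial_mul (m d : ℕ) (h : d ≤ m) :
    ((Nat.factorial (m-d) : ℝ) * (Nat.factorial d : ℝ))⁻¹
      = (m.choose d : ℝ) / (Nat.factorial m : ℝ) := by
  have key := Nat.choose_mul_factorial_mul_factorial h
  have h1 : ((m.choose d : ℕ) : ℝ) * (Nat.factorial d : ℝ) * (Nat.factorial (m-d) : ℝ)
      = (Nat.factorial m : ℝ) := by exact_mod_cast congrArg (Nat.cast (R := ℝ)) key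
  have h2 : (Nat.factorial (m-d) : ℝ) ≠ 0 := Nat.cast_ne_zero.mpr (Nat.factorial_ne_zero _)
  have h3 : (Nat.factorial d : ℝ) ≠ 0 := Nat.cast_ne_zero.mpr (Nat.factorial_ne_zero _)
  have h4 : (Nat.factorial m : ℝ) ≠ 0 := Nat.cast_ne_zero.mpr (Nat.factorial_ne_zero _)
  field_simp
  linarith [h1]

lemma key_sum (m : ℕ) :
    ∑ d ∈ Finset.range (m+1), (-1:ℝ)^(m-d) / (Nat.factorial (m-d) * Nat.factorial d)
      = if m = 0 then 1 else 0 := by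
  have hb := add_pow (1:ℝ) (-1) m
  simp only [one_pow, one_mul, add_neg_cancel] at hb
  have h1 : ∀ d ∈ Finset.range (m+1),
      (-1:ℝ)^(m-d) / (Nat.factorial (m-d) * Nat.factorial d)
        = ((-1:ℝ)^(m-d) * (m.choose d : ℝ)) / (Nat.factorial m : ℝ) := by
    intro d hd
    rw [div_eq_mul_inv, cast_inv_factorial_mul m d (by simpa [Nat.lt_succ_iff] using hd)]
    ring
  rw [Finset.sum_congr rfl h1, ← Finset.sum_div]
  rw [← hb]
  rcases Nat.eq_zero_or_pos m with hm | hm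
  · subst hm; simp
  · rw [zero_pow (by omega), if_neg (by omega), zero_div]

lemma Amat_mul_Bmat (n : ℕ) (hn : 1 ≤ n) : Amat n * Bmat n (cN n) = Emat n := by
  ext j k
  rw [Matrix.mul_apply]
  by_cases hk : (k:ℕ) = n-1
  · -- last column
    have hB : ∀ i : Fin n, Bmat n (cN n) i k = ((Nat.factorial ((i:ℕ)+1) : ℝ))⁻¹ := by
      intro i
      have hc : cN n k = -1 := by simp [cN, hk]
      have htn : ((i:ℤ) - cN n k).toNat = (i:ℕ)+1 := by rw [hc]; omega
      show (if cN n k ≤ (i:ℤ) then ((Nat.factorial (((i:ℤ) - cN n k).toNat) : ℝ))⁻¹ else 0) = _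
      rw [if_pos (by rw [hc]; omega), htn]
    simp only [hB]
    have hstep : ∀ i : Fin n, Amat n j i * ((Nat.factorial ((i:ℕ)+1) : ℝ))⁻¹
        = if (i:ℕ) ∈ Finset.range ((j:ℕ)+1) then
            (-1:ℝ)^((j:ℕ)-(i:ℕ)) / (Nat.factorial ((j:ℕ)-(i:ℕ)) * Nat.factorial ((i:ℕ)+1)) else 0 := by
      intro i
      simp only [Amat, Matrix.of_apply, Finset.mem_range]
      by_cases h : (i:ℕ) ≤ (j:ℕ)
      · rw [if_pos h, if_pos (by omega), div_eq_mul_inv, mul_inv]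
        ring
      · rw [if_neg h, if_neg (by omega), zero_mul]
    rw [Finset.sum_congr rfl (fun i _ => hstep i)]
    rw [Fin.sum_univ_eq_sum_range (fun i => if i ∈ Finset.range ((j:ℕ)+1) then
      (-1:ℝ)^((j:ℕ)-i) / (Nat.factorial ((j:ℕ)-i) * Nat.factorial (i+1)) else 0) n]
    rw [Finset.sum_ite_mem]
    have hinter0 : Finset.range n ∩ Finset.range ((j:ℕ)+1) = Finset.range ((j:ℕ)+1) := by
      apply Finset.inter_eq_right.mpr
      intro x hx
      simp only [Finset.mem_range] at hx ⊢
      omega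
    rw [hinter0]
    show wv n j = Emat n j k
    simp [Emat, hk]
  · -- ordinary column
    have hB : ∀ i : Fin n, Bmat n (cN n) i k
        = if (k:ℕ) ≤ (i:ℕ) then ((Nat.factorial ((i:ℕ)-(k:ℕ)) : ℝ))⁻¹ else 0 := by
      intro i
      have hc : cN n k = ((k:ℕ):ℤ) := by simp [cN, hk]
      show (if cN n k ≤ (i:ℤ) then ((Nat.factorial (((i:ℤ) - cN n k).toNat) : ℝ))⁻¹ else 0) = _
      rw [hc]
      by_cases h : (k:ℕ) ≤ (i:ℕ)
      · have htn : ((i:ℤ) - ((k:ℕ):ℤ)).toNat = (i:ℕ)-(k:ℕ) := by omega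
        rw [if_pos (by exact_mod_cast h), htn, if_pos h]
      · rw [if_neg (by exact_mod_cast h), if_neg h]
    simp only [hB]
    have hstep : ∀ i : Fin n, Amat n j i *
        (if (k:ℕ) ≤ (i:ℕ) then ((Nat.factorial ((i:ℕ)-(k:ℕ)) : ℝ))⁻¹ else 0)
        = if (i:ℕ) ∈ Finset.Ico (k:ℕ) ((j:ℕ)+1) then
            (-1:ℝ)^((j:ℕ)-(i:ℕ)) / (Nat.factorial ((j:ℕ)-(i:ℕ)) * Nat.factorial ((i:ℕ)-(k:ℕ))) else 0 := by
      intro i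
      simp only [Amat, Matrix.of_apply, Finset.mem_Ico]
      by_cases h1 : (i:ℕ) ≤ (j:ℕ)
      · by_cases h2 : (k:ℕ) ≤ (i:ℕ)
        · rw [if_pos h1, if_pos h2, if_pos (by omega), div_eq_mul_inv, mul_inv]
          ring
        · rw [if_pos h1, if_neg h2, mul_zero, if_neg (fun hcon => h2 hcon.1)]
      · rw [if_neg h1, zero_mul, if_neg (fun hcon => absurd hcon.2 (by omega))]
    rw [Finset.sum_congr rfl (fun i _ => hstep i)]
    rw [Fin.sum_univ_eq_sum_range (fun i => if i ∈ Finset.Ico (k:ℕ) ((j:ℕ)+1) then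
      (-1:ℝ)^((j:ℕ)-i) / (Nat.factorial ((j:ℕ)-i) * Nat.factorial (i-(k:ℕ))) else 0) n]
    rw [Finset.sum_ite_mem]
    have hinter : Finset.range n ∩ Finset.Ico (k:ℕ) ((j:ℕ)+1) = Finset.Ico (k:ℕ) ((j:ℕ)+1) := by
      apply Finset.inter_eq_right.mpr
      intro x hx
      simp only [Finset.mem_Ico] at hx
      simp only [Finset.mem_range]
      omega
    rw [hinter]
    by_cases hjk : (j:ℕ) < (k:ℕ)
    · rw [Finset.Ico_eq_empty (by omega), Finset.sum_empty]
      have : ¬ ((j:ℕ) = (k:ℕ)) := by omega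
      simp [Emat, hk, this]
    · push_neg at hjk
      rw [Finset.sum_Ico_eq_sum_range]
      have hcong : ∀ d ∈ Finset.range ((j:ℕ)+1-(k:ℕ)),
          (-1:ℝ)^((j:ℕ)-((k:ℕ)+d)) / (Nat.factorial ((j:ℕ)-((k:ℕ)+d)) * Nat.factorial (((k:ℕ)+d)-(k:ℕ)))
          = (-1:ℝ)^(((j:ℕ)-(k:ℕ))-d) / (Nat.factorial (((j:ℕ)-(k:ℕ))-d) * Nat.factorial d) := by
        intro d hd
        have e1 : (j:ℕ)-((k:ℕ)+d) = ((j:ℕ)-(k:ℕ))-d := by omega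
        have e2 : ((k:ℕ)+d)-(k:ℕ) = d := by omega
        rw [e1, e2]
      have hlen : (j:ℕ)+1-(k:ℕ) = ((j:ℕ)-(k:ℕ))+1 := by omega
      rw [Finset.sum_congr (by rw [hlen]) (fun d hd => hcong d (by rwa [hlen]))]
      rw [key_sum ((j:ℕ)-(k:ℕ))]
      by_cases hjk2 : (j:ℕ) = (k:ℕ)
      · rw [if_pos (by omega)]
        simp [Emat, hk, hjk2]
      · rw [if_neg (by omega)]
        simp [Emat, hk, hjk2]

lemma det_Amat (n : ℕ) : (Amat n).det = 1 := by
  have htri : (Amat n).BlockTriangular OrderDual.toDual := by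
    intro i j hij
    have h : (i:ℕ) < (j:ℕ) := hij
    exact if_neg (by omega)
  rw [Matrix.det_of_lowerTriangular _ htri]
  apply Finset.prod_eq_one
  intro i _
  simp [Amat]

lemma det_Emat (n : ℕ) (hn : 1 ≤ n) : (Emat n).det = wv n ⟨n-1, by omega⟩ := by
  have htri : (Emat n).BlockTriangular id := by
    intro i j hij
    have h : (j:ℕ) < (i:ℕ) := hij
    have h2 : (i:ℕ) ≤ n-1 := by omega
    simp only [Emat, Matrix.of_apply]
    rw [if_neg (by omega), if_neg (by omega)]
  rw [Matrix.det_of_upperTriangular htri]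
  rw [Finset.prod_eq_single (⟨n-1, by omega⟩ : Fin n)]
  · simp [Emat]
  · intro i _ hne
    have : (i:ℕ) ≠ n-1 := fun h => hne (by ext; exact h)
    simp [Emat, this]
  · intro h
    exact absurd (Finset.mem_univ _) h

lemma wv_last (n : ℕ) (hn : 1 ≤ n) :
    wv n ⟨n-1, by omega⟩ = (-1:ℝ)^(n+1) / (Nat.factorial n : ℝ) := by
  have hks := key_sum n
  rw [if_neg (by omega), Finset.sum_range_succ'] at hks
  unfold wv
  simp only
  have hidx : (n-1)+1 = n := by omega
  rw [Finset.sum_congr (by rw [hidx]) (fun i hi => ?_)]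
  · rw [show (∑ i ∈ Finset.range n, (-1:ℝ)^(n-(i+1)) / (Nat.factorial (n-(i+1)) * Nat.factorial (i+1))) = -((-1:ℝ)^(n-0) / (Nat.factorial (n-0) * Nat.factorial 0)) from by linarith [hks]]
    simp only [Nat.sub_zero, Nat.factorial_zero, Nat.cast_one, mul_one]
    rw [pow_succ]
    ring
  · have e1 : (n-1) - i = n - (i+1) := by omega
    rw [e1]

lemma det_Bmat_cN (n : ℕ) (hn : 1 ≤ n) :
    (Bmat n (cN n)).det = (-1:ℝ)^(n+1) / (Nat.factorial n : ℝ) := by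
  have h := congrArg Matrix.det (Amat_mul_Bmat n hn)
  rw [Matrix.det_mul, det_Amat, one_mul, det_Emat n hn, wv_last n hn] at h
  exact h

open Asymptotics in
/-- As t → 0, U_n(t) = (−1)^{n+1} tⁿ/n! + O(t^{n+1}); hence U_n(t)/tⁿ → (−1)^{n+1}/n!
and 1 − U_n(t)² = 1 − t^{2n}/(n!)² + O(t^{2n+1}). -/
theorem Un_asymptotics_at_zero (n : ℕ) (hn : 1 ≤ n) :
    ((fun t : ℝ => Un n t - (-1) ^ (n + 1) * t ^ n / (n.factorial : ℝ)) =O[nhds 0]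
        fun t : ℝ => t ^ (n + 1)) ∧
    Tendsto (fun t : ℝ => Un n t / t ^ n) (nhdsWithin 0 {(0:ℝ)}ᶜ)
      (nhds ((-1) ^ (n + 1) / (n.factorial : ℝ))) ∧
    ((fun t : ℝ => (1 - (Un n t) ^ 2) - (1 - t ^ (2 * n) / (n.factorial : ℝ) ^ 2)) =O[nhds 0]
        fun t : ℝ => t ^ (2 * n + 1)) := by
  set c : ℝ := (-1) ^ (n + 1) / (n.factorial : ℝ) with hc
  set lastIdx : Fin n := ⟨n-1, by omega⟩ with hlast
  set Nt : ℝ → ℝ := fun t => ((Tmat n t).updateCol lastIdx (fplus n t)).det with hNt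
  -- Dn asymptotics
  have hsumD : (∑ j : Fin n, ((j:ℤ) - cD n j)) = ((0:ℕ):ℤ) := by
    simp [cD]
  have hD0 := det_fk_asymp n (cD n) 0 hsumD
  rw [det_Bmat_cD] at hD0
  have hTD : ∀ t : ℝ, Matrix.det (Matrix.of fun j k : Fin n => fk t ((j:ℤ) - cD n k)) = Dn n t := by
    intro t; rfl
  have hD : (fun t : ℝ => Dn n t - 1) =O[nhds 0] fun t : ℝ => t^1 := by
    simpa [hTD] using hD0
  -- Nt asymptotics
  have hsumN : (∑ j : Fin n, ((j:ℤ) - cN n j)) = ((n:ℕ):ℤ) := by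
    rw [Finset.sum_eq_single lastIdx]
    · have hval : cN n lastIdx = -1 := by simp [cN, hlast]
      rw [hval]
      have : ((lastIdx : Fin n) : ℤ) = ((n-1 : ℕ) : ℤ) := by simp [hlast]
      rw [this]
      omega
    · intro j _ hne
      have hj : (j:ℕ) ≠ n - 1 := fun hcon => hne (Fin.ext hcon)
      simp [cN, hj]
    · intro h; exact absurd (Finset.mem_univ _) h
  have hupdate : ∀ t : ℝ, (Tmat n t).updateCol lastIdx (fplus n t)
      = Matrix.of (fun j k : Fin n => fk t ((j:ℤ) - cN n k)) := by
    intro t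
    ext j k
    rw [Matrix.updateCol_apply]
    by_cases h : k = lastIdx
    · subst h
      rw [if_pos rfl]
      have hcN : cN n lastIdx = -1 := by simp [cN, hlast]
      simp only [Matrix.of_apply, hcN, fplus]
      norm_num
    · have hk : (k:ℕ) ≠ n-1 := fun hcon => h (Fin.ext hcon)
      rw [if_neg h]
      have hcN : cN n k = ((k:ℕ):ℤ) := by simp [cN, hk]
      simp only [Matrix.of_apply, hcN, Tmat]
  have hN0 := det_fk_asymp n (cN n) n hsumN
  rw [det_Bmat_cN n hn] at hN0
  have hN : (fun t : ℝ => Nt t - t^n * c) =O[nhds 0] fun t : ℝ => t^(n+1) := by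
    simp only [hNt, hupdate, hc]
    exact hN0
  -- Un = Dn⁻¹ * Nt
  have hUn : ∀ t : ℝ, Un n t = (Dn n t)⁻¹ * Nt t := by
    intro t
    unfold Un
    rw [Matrix.inv_def, Matrix.smul_mulVec, ← Matrix.cramer_eq_adjugate_mulVec]
    unfold dotProduct
    rw [Finset.sum_eq_single lastIdx]
    · have hδ : deltaMinus n lastIdx = 1 := by simp [deltaMinus, hlast]
      rw [hδ, mul_one, Pi.smul_apply, Matrix.cramer_apply, smul_eq_mul,
        Ring.inverse_eq_inv']
      rfl
    · intro j _ hne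
      have hj : (j:ℕ) ≠ n - 1 := fun hcon => hne (Fin.ext hcon)
      have hδ : deltaMinus n j = 0 := by simp [deltaMinus, hj]
      rw [hδ, mul_zero]
    · intro h; exact absurd (Finset.mem_univ _) h
  -- Dn tends to 1, eventually nonzero
  have hDtends : Tendsto (fun t : ℝ => Dn n t) (nhds 0) (nhds 1) := by
    have h1 : Tendsto (fun t : ℝ => Dn n t - 1) (nhds 0) (nhds 0) :=
      hD.trans_tendsto (by simpa using (continuous_pow 1).tendsto' (0:ℝ) 0 (by simp))
    have := h1.add_const 1
    simpa using this
  have hDev : ∀ᶠ t : ℝ in nhds 0, (1:ℝ)/2 < Dn n t :=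
    hDtends.eventually (eventually_gt_nhds (by norm_num))
  have hDinv : (fun t : ℝ => (Dn n t)⁻¹) =O[nhds 0] (fun _ : ℝ => (1:ℝ)) := by
    rw [isBigO_iff]
    refine ⟨2, ?_⟩
    filter_upwards [hDev] with t ht
    rw [Real.norm_eq_abs, Real.norm_eq_abs, abs_inv, abs_one, mul_one]
    rw [abs_of_pos (by linarith)]
    rw [inv_le_comm₀ (by linarith) (by norm_num)]
    linarith
  -- main O statement
  have hmain : (fun t : ℝ => Un n t - c * t ^ n) =O[nhds 0] fun t : ℝ => t ^ (n + 1) := by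
    have hNum : (fun t : ℝ => Nt t - c * t^n * Dn n t) =O[nhds 0] fun t : ℝ => t^(n+1) := by
      have h2 : (fun t : ℝ => c * (t^n * (Dn n t - 1))) =O[nhds 0] fun t : ℝ => t^(n+1) := by
        have := ((isBigO_refl (fun t : ℝ => t^n) (nhds 0)).mul hD).const_mul_left c
        refine this.trans ?_
        have heq : (fun x : ℝ => x ^ n * x ^ 1) = fun t : ℝ => t^(n+1) := by
          funext x; rw [← pow_add]
        exact heq ▸ isBigO_refl _ _
      have := hN.sub h2
      refine this.congr (fun t => ?_) (fun _ => rfl)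
      ring
    have hprod := hDinv.mul hNum
    have heq : (fun x : ℝ => (1:ℝ) * x^(n+1)) = fun t : ℝ => t^(n+1) := by
      funext x; rw [one_mul]
    rw [heq] at hprod
    refine hprod.congr' (EventuallyEq.symm ?_) (EventuallyEq.refl _ _)
    filter_upwards [hDev] with t ht
    have hDne : Dn n t ≠ 0 := by linarith
    rw [hUn t]
    field_simp
  refine ⟨?_, ?_, ?_⟩
  · refine hmain.congr (fun t => ?_) (fun _ => rfl)
    rw [hc]; ring
  · -- tendsto
    have hlo : (fun t : ℝ => Un n t - c * t ^ n) =o[nhdsWithin 0 {(0:ℝ)}ᶜ] fun t : ℝ => t ^ n := by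
      have h1 : (fun t : ℝ => t^(n+1)) =o[nhds 0] fun t : ℝ => t^n :=
        isLittleO_pow_pow (by omega)
      exact (hmain.trans_isLittleO h1).mono nhdsWithin_le_nhds
    have h2 := hlo.tendsto_div_nhds_zero
    have h3 : Tendsto (fun t : ℝ => Un n t / t^n - c) (nhdsWithin 0 {(0:ℝ)}ᶜ) (nhds 0) := by
      refine h2.congr' ?_
      filter_upwards [self_mem_nhdsWithin] with t ht
      have htne : t ≠ 0 := ht
      have hpow : t^n ≠ 0 := pow_ne_zero _ htne
      rw [sub_div, mul_div_assoc, div_self hpow, mul_one]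
    have := h3.add_const c
    simpa using this
  · -- third statement
    have hUnO : (fun t : ℝ => Un n t + c * t^n) =O[nhds 0] fun t : ℝ => t^n := by
      have h1 : (fun t : ℝ => Un n t - c * t^n) =O[nhds 0] fun t : ℝ => t^n :=
        hmain.trans (pow_isBigO_pow (by omega))
      have h2 : (fun t : ℝ => c * t^n) =O[nhds 0] fun t : ℝ => t^n :=
        (isBigO_refl _ _).const_mul_left c
      have := (h1.add h2).add h2
      refine this.congr (fun t => ?_) (fun _ => rfl)
      ring
    have hprod := hmain.mul hUnO
    have heq : (fun x : ℝ => x^(n+1) * x^n) = fun t : ℝ => t^(2*n+1) := by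
      funext x; rw [← pow_add]; congr 1; omega
    rw [heq] at hprod
    refine (hprod.neg_left).congr (fun t => ?_) (fun _ => rfl)
    have hc2 : c^2 = 1 / (n.factorial : ℝ)^2 := by
      rw [hc, div_pow]
      have : ((-1:ℝ) ^ (n + 1)) ^ 2 = 1 := by
        rw [← pow_mul, mul_comm, pow_mul]
        norm_num
      rw [this, one_div]
    have ht2 : t^(2*n) = (t^n)^2 := by rw [← pow_mul]; ring_nf
    calc -((Un n t - c * t^n) * (Un n t + c * t^n)) = c^2 * (t^n)^2 - (Un n t)^2 := by ring
      _ = (1 - (Un n t)^2) - (1 - t^(2*n) / (n.factorial : ℝ)^2) := by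
          rw [hc2, ht2]; ring
end
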